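/- Let T > 0 and M₀ ≥ 0. Let W, S : [0,T] × [0,π] → ℝ be continuous with |W(t,x)| ≤ M₀ for all (t,x). Let R : [0,T] × [0,π] → ℝ be continuous, continuously differentiable in t and twice continuously differentiable in x, satisfying: R(0,x) = 0 for all x ∈ [0,π]; the Neumann boundary conditions ∂R/∂x (t,0) = ∂R/∂x (t,π) = 0 for all t ∈ [0,T]; and the equation ∂R/∂t (t,x) - ∂²R/∂x² (t,x) = W(t,x) R(t,x) + S(t,x) on [0,T] × [0,π]. Then for every t ∈ [0,T], ‖R(t,·)‖_{L²(0,π)} ≤ e^{M₀ t} ∫₀ᵗ e^{-M₀ s} ‖S(s,·)‖_{L²(0,π)} ds. -/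

import Mathlib

open Real Set MeasureTheory intervalIntegral

lemma cs_aux (f g : ℝ → ℝ) (hf : ContinuousOn f (Icc 0 π)) (hg : ContinuousOn g (Icc 0 π)) :
    ∫ x in (0:ℝ)..π, f x * g x ≤
      Real.sqrt (∫ x in (0:ℝ)..π, f x ^ 2) * Real.sqrt (∫ x in (0:ℝ)..π, g x ^ 2) := by
  have huIcc : uIcc (0:ℝ) π = Icc 0 π := uIcc_of_le pi_pos.le
  have hif : IntervalIntegrable (fun x => f x ^ 2) volume 0 π :=
    (huIcc ▸ (hf.pow 2)).intervalIntegrable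
  have hig : IntervalIntegrable (fun x => g x ^ 2) volume 0 π :=
    (huIcc ▸ (hg.pow 2)).intervalIntegrable
  have hifg : IntervalIntegrable (fun x => f x * g x) volume 0 π :=
    (huIcc ▸ (hf.mul hg)).intervalIntegrable
  set A := ∫ x in (0:ℝ)..π, f x ^ 2 with hA_def
  set B := ∫ x in (0:ℝ)..π, g x ^ 2 with hB_def
  set C := ∫ x in (0:ℝ)..π, f x * g x with hC_def
  have hA : 0 ≤ A := intervalIntegral.integral_nonneg pi_pos.le (fun x _ => sq_nonneg _)
  have hB : 0 ≤ B := intervalIntegral.integral_nonneg pi_pos.le (fun x _ => sq_nonneg _)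
  have key : ∀ l : ℝ, 0 ≤ l ^ 2 * A - 2 * l * C + B := by
    intro l
    have h2 : (0:ℝ) ≤ ∫ x in (0:ℝ)..π, (l * f x - g x) ^ 2 :=
      intervalIntegral.integral_nonneg pi_pos.le (fun x _ => sq_nonneg _)
    have h1 : EqOn (fun x => (l * f x - g x) ^ 2)
        (fun x => (l ^ 2 * f x ^ 2 - 2 * l * (f x * g x)) + g x ^ 2) (uIcc (0:ℝ) π) := by
      intro x _; ring
    rw [intervalIntegral.integral_congr h1,
      intervalIntegral.integral_add ((hif.const_mul _).sub (hifg.const_mul _)) hig,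
      intervalIntegral.integral_sub (hif.const_mul _) (hifg.const_mul _),
      intervalIntegral.integral_const_mul, intervalIntegral.integral_const_mul] at h2
    linarith
  by_cases hA0 : A = 0
  · have hC0 : C ≤ 0 := by
      by_contra hC
      push_neg at hC
      have hk := key ((B + 1) / (2 * C))
      rw [hA0] at hk
      have h2C : (2 * C) ≠ 0 := by positivity
      have hmul : 2 * ((B + 1) / (2 * C)) * C = B + 1 := by field_simp
      nlinarith [hk, hmul]
    calc C ≤ 0 := hC0
      _ ≤ Real.sqrt A * Real.sqrt B := by positivity
  · have hApos : 0 < A := lt_of_le_of_ne hA (Ne.symm hA0)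
    have hkey := key (C / A)
    have h1 : (C / A) ^ 2 * A - 2 * (C / A) * C + B = B - C ^ 2 / A := by
      field_simp; ring
    rw [h1] at hkey
    have hC2 : C ^ 2 ≤ A * B := by
      have := (div_le_iff₀ hApos).mp (by linarith : C ^ 2 / A ≤ B)
      linarith
    calc C ≤ |C| := le_abs_self C
      _ = Real.sqrt (C ^ 2) := (Real.sqrt_sq_eq_abs C).symm
      _ ≤ Real.sqrt (A * B) := Real.sqrt_le_sqrt hC2
      _ = Real.sqrt A * Real.sqrt B := Real.sqrt_mul hA B


/-- Parabolic energy estimate for the remainder: if `R` solves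
`∂ₜR - ∂ₓₓR = W R + S` on `[0,T]×[0,π]` with `R(0,·) = 0`, Neumann boundary
conditions, and `|W| ≤ M₀`, then
`‖R(t,·)‖_{L²(0,π)} ≤ e^{M₀ t} ∫₀ᵗ e^{-M₀ s} ‖S(s,·)‖_{L²(0,π)} ds`. -/
theorem stmt_6 (T M₀ : ℝ) (hT : 0 < T) (hM₀ : 0 ≤ M₀)
    (W S : ℝ → ℝ → ℝ)
    (hWcont : ContinuousOn (fun p : ℝ × ℝ => W p.1 p.2) (Icc 0 T ×ˢ Icc 0 π))
    (hScont : ContinuousOn (fun p : ℝ × ℝ => S p.1 p.2) (Icc 0 T ×ˢ Icc 0 π))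
    (hWbdd : ∀ t ∈ Icc (0 : ℝ) T, ∀ x ∈ Icc (0 : ℝ) π, |W t x| ≤ M₀)
    (R Rt Rx Rxx : ℝ → ℝ → ℝ)
    (hRcont : ContinuousOn (fun p : ℝ × ℝ => R p.1 p.2) (Icc 0 T ×ˢ Icc 0 π))
    (hRtcont : ContinuousOn (fun p : ℝ × ℝ => Rt p.1 p.2) (Icc 0 T ×ˢ Icc 0 π))
    (hRxcont : ContinuousOn (fun p : ℝ × ℝ => Rx p.1 p.2) (Icc 0 T ×ˢ Icc 0 π))
    (hRxxcont : ContinuousOn (fun p : ℝ × ℝ => Rxx p.1 p.2) (Icc 0 T ×ˢ Icc 0 π))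
    (hRt : ∀ t ∈ Icc (0 : ℝ) T, ∀ x ∈ Icc (0 : ℝ) π, HasDerivAt (fun t' => R t' x) (Rt t x) t)
    (hRx : ∀ t ∈ Icc (0 : ℝ) T, ∀ x ∈ Icc (0 : ℝ) π, HasDerivAt (fun x' => R t x') (Rx t x) x)
    (hRxx : ∀ t ∈ Icc (0 : ℝ) T, ∀ x ∈ Icc (0 : ℝ) π, HasDerivAt (fun x' => Rx t x') (Rxx t x) x)
    (hR0 : ∀ x ∈ Icc (0 : ℝ) π, R 0 x = 0)
    (hNeu : ∀ t ∈ Icc (0 : ℝ) T, Rx t 0 = 0 ∧ Rx t π = 0)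
    (hEq : ∀ t ∈ Icc (0 : ℝ) T, ∀ x ∈ Icc (0 : ℝ) π,
      Rt t x - Rxx t x = W t x * R t x + S t x) :
    ∀ t ∈ Icc (0 : ℝ) T,
      Real.sqrt (∫ x in (0 : ℝ)..π, (R t x) ^ 2)
        ≤ Real.exp (M₀ * t) *
            ∫ s in (0 : ℝ)..t, Real.exp (-M₀ * s) * Real.sqrt (∫ x in (0 : ℝ)..π, (S s x) ^ 2) := by
  have hπ : (0:ℝ) ≤ π := pi_pos.le
  have huIcc : uIcc (0:ℝ) π = Icc 0 π := uIcc_of_le hπ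
  have huIoc : Set.uIoc (0:ℝ) π = Ioc 0 π := uIoc_of_le hπ
  -- slice continuity
  have sliceX : ∀ (f : ℝ → ℝ → ℝ),
      ContinuousOn (fun p : ℝ × ℝ => f p.1 p.2) (Icc 0 T ×ˢ Icc 0 π) →
      ∀ t ∈ Icc (0:ℝ) T, ContinuousOn (f t) (Icc 0 π) := by
    intro f hf t ht
    have : ContinuousOn ((fun p : ℝ × ℝ => f p.1 p.2) ∘ (fun x => (t, x))) (Icc 0 π) :=
      hf.comp ((continuous_const.prodMk continuous_id).continuousOn)
        (fun x hx => mk_mem_prod ht hx)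
    exact this
  have sliceT : ∀ (f : ℝ → ℝ → ℝ),
      ContinuousOn (fun p : ℝ × ℝ => f p.1 p.2) (Icc 0 T ×ˢ Icc 0 π) →
      ∀ x ∈ Icc (0:ℝ) π, ContinuousOn (fun s => f s x) (Icc 0 T) := by
    intro f hf x hx
    have : ContinuousOn ((fun p : ℝ × ℝ => f p.1 p.2) ∘ (fun s => (s, x))) (Icc 0 T) :=
      hf.comp ((continuous_id.prodMk continuous_const).continuousOn)
        (fun s hs => mk_mem_prod hs hx)
    exact this
  -- energies
  set E : ℝ → ℝ := fun t => ∫ x in (0:ℝ)..π, (R t x) ^ 2 with hE_def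
  set ES : ℝ → ℝ := fun t => ∫ x in (0:ℝ)..π, (S t x) ^ 2 with hES_def
  set g : ℝ → ℝ := fun t => ∫ x in (0:ℝ)..π, 2 * R t x * Rt t x with hg_def
  have hEnonneg : ∀ t, 0 ≤ E t := fun t =>
    intervalIntegral.integral_nonneg hπ (fun x _ => sq_nonneg _)
  have hESnonneg : ∀ t, 0 ≤ ES t := fun t =>
    intervalIntegral.integral_nonneg hπ (fun x _ => sq_nonneg _)
  have hE0 : E 0 = 0 := by
    have : EqOn (fun x => (R 0 x) ^ 2) (fun _ => (0:ℝ)) (uIcc (0:ℝ) π) := by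
      intro x hx
      rw [huIcc] at hx
      simp [hR0 x hx]
    rw [hE_def]
    simp only
    rw [intervalIntegral.integral_congr this]
    simp
  -- global bounds
  have hKcp : IsCompact (Icc (0:ℝ) T ×ˢ Icc (0:ℝ) π) := (isCompact_Icc).prod isCompact_Icc
  obtain ⟨C₁, hC₁⟩ := hKcp.exists_bound_of_continuousOn
    ((continuousOn_const.mul hRcont).mul hRtcont :
      ContinuousOn (fun p : ℝ × ℝ => 2 * R p.1 p.2 * Rt p.1 p.2) _)
  -- continuity of E on Icc 0 T via dominated convergence
  obtain ⟨CR, hCR⟩ := hKcp.exists_bound_of_continuousOn hRcont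
  have hIocInt : (volume (Ioc (0:ℝ) π)) < ⊤ := by
    rw [Real.volume_Ioc]; exact ENNReal.ofReal_lt_top
  have hE_as : ∀ t, E t = ∫ x in Ioc (0:ℝ) π, (R t x) ^ 2 := by
    intro t; rw [hE_def]; exact intervalIntegral.integral_of_le hπ
  have hEcont : ContinuousOn E (Icc 0 T) := by
    have : ContinuousOn (fun t => ∫ x in Ioc (0:ℝ) π, (R t x) ^ 2) (Icc 0 T) := by
      apply MeasureTheory.continuousOn_of_dominated
        (bound := fun _ => CR ^ 2)
      · intro t ht
        exact ((sliceX R hRcont t ht).pow 2 |>.mono Ioc_subset_Icc_self).aestronglyMeasurable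
          measurableSet_Ioc
      · intro t ht
        filter_upwards [ae_restrict_mem measurableSet_Ioc] with x hx
        have hmem : (t, x) ∈ Icc (0:ℝ) T ×ˢ Icc (0:ℝ) π :=
          mk_mem_prod ht (Ioc_subset_Icc_self hx)
        have h1 : |R t x| ≤ CR := by simpa [Real.norm_eq_abs] using hCR (t, x) hmem
        have : (R t x) ^ 2 ≤ CR ^ 2 := by nlinarith [abs_nonneg (R t x), sq_abs (R t x)]
        rw [Real.norm_eq_abs, abs_of_nonneg (sq_nonneg _)]
        exact this
      · exact (integrableOn_const hIocInt.ne)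
      · filter_upwards [ae_restrict_mem measurableSet_Ioc] with x hx
        exact (sliceT R hRcont x (Ioc_subset_Icc_self hx)).pow 2
    exact this.congr (fun t _ => hE_as t)
  -- continuity of ES on Icc 0 T
  obtain ⟨CS, hCS⟩ := hKcp.exists_bound_of_continuousOn hScont
  have hES_as : ∀ t, ES t = ∫ x in Ioc (0:ℝ) π, (S t x) ^ 2 := by
    intro t; rw [hES_def]; exact intervalIntegral.integral_of_le hπ
  have hEScont : ContinuousOn ES (Icc 0 T) := by
    have : ContinuousOn (fun t => ∫ x in Ioc (0:ℝ) π, (S t x) ^ 2) (Icc 0 T) := by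
      apply MeasureTheory.continuousOn_of_dominated (bound := fun _ => CS ^ 2)
      · intro t ht
        exact ((sliceX S hScont t ht).pow 2 |>.mono Ioc_subset_Icc_self).aestronglyMeasurable
          measurableSet_Ioc
      · intro t ht
        filter_upwards [ae_restrict_mem measurableSet_Ioc] with x hx
        have hmem : (t, x) ∈ Icc (0:ℝ) T ×ˢ Icc (0:ℝ) π :=
          mk_mem_prod ht (Ioc_subset_Icc_self hx)
        have h1 : |S t x| ≤ CS := by simpa [Real.norm_eq_abs] using hCS (t, x) hmem
        have : (S t x) ^ 2 ≤ CS ^ 2 := by nlinarith [abs_nonneg (S t x), sq_abs (S t x)]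
        rw [Real.norm_eq_abs, abs_of_nonneg (sq_nonneg _)]
        exact this
      · exact (integrableOn_const hIocInt.ne)
      · filter_upwards [ae_restrict_mem measurableSet_Ioc] with x hx
        exact (sliceT S hScont x (Ioc_subset_Icc_self hx)).pow 2
    exact this.congr (fun t _ => hES_as t)
  -- derivative of E at interior points
  have hE' : ∀ t₀ ∈ Ioo (0:ℝ) T, HasDerivAt E (g t₀) t₀ := by
    intro t₀ ht₀
    set ε := min t₀ (T - t₀) with hε_def
    have hεpos : 0 < ε := lt_min ht₀.1 (sub_pos.mpr ht₀.2)
    have hball : Metric.ball t₀ ε ⊆ Icc 0 T := by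
      intro t ht
      rw [Metric.mem_ball, Real.dist_eq] at ht
      have h1 := abs_lt.mp ht
      constructor
      · have := le_min_iff.mp (le_refl ε)
        have h2 : ε ≤ t₀ := min_le_left _ _
        linarith [h1.1]
      · have h3 : ε ≤ T - t₀ := min_le_right _ _
        linarith [h1.2]
    have key := intervalIntegral.hasDerivAt_integral_of_dominated_loc_of_deriv_le
      (F := fun t x => (R t x) ^ 2) (F' := fun t x => 2 * R t x * Rt t x)
      (x₀ := t₀) (a := (0:ℝ)) (b := π) (μ := volume) (bound := fun _ => C₁)
      (Metric.ball_mem_nhds t₀ hεpos)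
      ?hFmeas ?hFint ?hF'meas ?hbound ?hboundint ?hdiff
    · exact key.2
    case hFmeas =>
      filter_upwards [Metric.ball_mem_nhds t₀ hεpos] with t ht
      rw [huIoc]
      exact ((sliceX R hRcont t (hball ht)).pow 2 |>.mono Ioc_subset_Icc_self).aestronglyMeasurable
        measurableSet_Ioc
    case hFint =>
      have ht₀Icc : t₀ ∈ Icc (0:ℝ) T := ⟨ht₀.1.le, ht₀.2.le⟩
      exact (huIcc ▸ ((sliceX R hRcont t₀ ht₀Icc).pow 2)).intervalIntegrable
    case hF'meas =>
      have ht₀Icc : t₀ ∈ Icc (0:ℝ) T := ⟨ht₀.1.le, ht₀.2.le⟩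
      rw [huIoc]
      have : ContinuousOn (fun x => 2 * R t₀ x * Rt t₀ x) (Icc 0 π) :=
        ((continuousOn_const.mul (sliceX R hRcont t₀ ht₀Icc)).mul
          (sliceX Rt hRtcont t₀ ht₀Icc))
      exact (this.mono Ioc_subset_Icc_self).aestronglyMeasurable measurableSet_Ioc
    case hbound =>
      filter_upwards with x hx t ht
      rw [huIoc] at hx
      have hmem : (t, x) ∈ Icc (0:ℝ) T ×ˢ Icc (0:ℝ) π :=
        mk_mem_prod (hball ht) (Ioc_subset_Icc_self hx)
      exact hC₁ (t, x) hmem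
    case hboundint => exact intervalIntegrable_const
    case hdiff =>
      filter_upwards with x hx t ht
      rw [huIoc] at hx
      have hxIcc : x ∈ Icc (0:ℝ) π := Ioc_subset_Icc_self hx
      have := (hRt t (hball ht) x hxIcc).fun_pow 2
      simpa [mul_comm, mul_assoc, mul_left_comm] using this
  -- bound on g
  have hgbound : ∀ t ∈ Icc (0:ℝ) T,
      g t ≤ 2 * M₀ * E t + 2 * Real.sqrt (E t) * Real.sqrt (ES t) := by
    intro t ht
    have hRc := sliceX R hRcont t ht
    have hRtc := sliceX Rt hRtcont t ht
    have hRxc := sliceX Rx hRxcont t ht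
    have hRxxc := sliceX Rxx hRxxcont t ht
    have hWc := sliceX W hWcont t ht
    have hSc := sliceX S hScont t ht
    have iRRxx : IntervalIntegrable (fun x => R t x * Rxx t x) volume 0 π :=
      (huIcc ▸ (hRc.mul hRxxc)).intervalIntegrable
    have iWRR : IntervalIntegrable (fun x => W t x * R t x ^ 2) volume 0 π :=
      (huIcc ▸ (hWc.mul (hRc.pow 2))).intervalIntegrable
    have iRS : IntervalIntegrable (fun x => R t x * S t x) volume 0 π :=
      (huIcc ▸ (hRc.mul hSc)).intervalIntegrable
    have iRR : IntervalIntegrable (fun x => R t x ^ 2) volume 0 π :=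
      (huIcc ▸ (hRc.pow 2)).intervalIntegrable
    have hsplit : g t = (2 * ∫ x in (0:ℝ)..π, R t x * Rxx t x)
        + ((2 * ∫ x in (0:ℝ)..π, W t x * R t x ^ 2)
          + (2 * ∫ x in (0:ℝ)..π, R t x * S t x)) := by
      have hEqOn : EqOn (fun x => 2 * R t x * Rt t x)
          (fun x => 2 * (R t x * Rxx t x)
            + (2 * (W t x * R t x ^ 2) + 2 * (R t x * S t x))) (uIcc (0:ℝ) π) := by
        intro x hx
        rw [huIcc] at hx
        have h := hEq t ht x hx
        simp only
        linear_combination (2 * R t x) * h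
      rw [hg_def]
      simp only
      rw [intervalIntegral.integral_congr hEqOn,
        intervalIntegral.integral_add (iRRxx.const_mul 2)
          ((iWRR.const_mul 2).add (iRS.const_mul 2)),
        intervalIntegral.integral_add (iWRR.const_mul 2) (iRS.const_mul 2),
        intervalIntegral.integral_const_mul, intervalIntegral.integral_const_mul,
        intervalIntegral.integral_const_mul]
    -- integration by parts
    have hIBP : (∫ x in (0:ℝ)..π, R t x * Rxx t x) ≤ 0 := by
      have hmin : min (0:ℝ) π = 0 := min_eq_left hπ
      have hmax : max (0:ℝ) π = π := max_eq_right hπ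
      have h := intervalIntegral.integral_mul_deriv_eq_deriv_mul_of_hasDerivAt
        (u := R t) (v := Rx t) (u' := Rx t) (v' := Rxx t)
        (a := (0:ℝ)) (b := π)
        (huIcc ▸ hRc) (huIcc ▸ hRxc)
        (fun x hx => by
          rw [hmin, hmax] at hx
          exact hRx t ht x (Ioo_subset_Icc_self hx))
        (fun x hx => by
          rw [hmin, hmax] at hx
          exact hRxx t ht x (Ioo_subset_Icc_self hx))
        (huIcc ▸ hRxc).intervalIntegrable (huIcc ▸ hRxxc).intervalIntegrable
      rw [(hNeu t ht).1, (hNeu t ht).2] at h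
      have hnn : (0:ℝ) ≤ ∫ x in (0:ℝ)..π, Rx t x * Rx t x :=
        intervalIntegral.integral_nonneg hπ (fun x _ => mul_self_nonneg _)
      rw [h]
      simp
      linarith
    have hW : (∫ x in (0:ℝ)..π, W t x * R t x ^ 2) ≤ M₀ * E t := by
      have h1 : (∫ x in (0:ℝ)..π, W t x * R t x ^ 2)
          ≤ ∫ x in (0:ℝ)..π, M₀ * R t x ^ 2 := by
        apply intervalIntegral.integral_mono_on hπ iWRR (iRR.const_mul M₀)
        intro x hx
        have hb := hWbdd t ht x hx
        have := le_trans (le_abs_self (W t x)) hb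
        exact mul_le_mul_of_nonneg_right this (sq_nonneg _)
      rw [intervalIntegral.integral_const_mul] at h1
      exact h1
    have hCSb : (∫ x in (0:ℝ)..π, R t x * S t x)
        ≤ Real.sqrt (E t) * Real.sqrt (ES t) := cs_aux (R t) (S t) hRc hSc
    rw [hsplit]
    linarith
  -- the forcing term and primitive
  set q : ℝ → ℝ := fun s => Real.exp (-M₀ * s) * Real.sqrt (ES s) with hq_def
  have hqcont : ContinuousOn q (Icc 0 T) := by
    apply ContinuousOn.mul
    · exact (Real.continuous_exp.comp (continuous_const.mul continuous_id)).continuousOn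
    · exact hEScont.sqrt
  set P : ℝ → ℝ := fun t => ∫ s in (0:ℝ)..t, q s with hP_def
  have hqint : ∀ t ∈ Icc (0:ℝ) T, IntervalIntegrable q volume 0 t := by
    intro t ht
    apply ContinuousOn.intervalIntegrable
    apply hqcont.mono
    rw [uIcc_of_le ht.1]
    exact Icc_subset_Icc le_rfl ht.2
  have hPcont : ContinuousOn P (Icc 0 T) := by
    have := intervalIntegral.continuousOn_primitive_interval'
      (hqint T ⟨hT.le, le_rfl⟩) (left_mem_uIcc (a := (0:ℝ)) (b := T))
    rwa [uIcc_of_le hT.le] at this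
  have hP' : ∀ t ∈ Ioo (0:ℝ) T, HasDerivAt P (q t) t := by
    intro t ht
    have htIcc : t ∈ Icc (0:ℝ) T := ⟨ht.1.le, ht.2.le⟩
    apply intervalIntegral.integral_hasDerivAt_right (hqint t htIcc)
    · exact (hqcont.mono Ioo_subset_Icc_self).stronglyMeasurableAtFilter isOpen_Ioo t ht
    · exact (hqcont.continuousAt (Icc_mem_nhds ht.1 ht.2))
  -- the Gronwall argument with ε-regularization
  intro t₀ ht₀
  show Real.sqrt (E t₀) ≤ Real.exp (M₀ * t₀) * P t₀
  have hmain : ∀ ε > (0:ℝ), Real.exp (-M₀ * t₀) * Real.sqrt (E t₀) ≤ P t₀ + ε := by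
    intro ε hε
    set φ : ℝ → ℝ := fun t => Real.exp (-M₀ * t) * Real.sqrt (E t + ε ^ 2) - P t with hφ_def
    have hφcont : ContinuousOn φ (Icc 0 T) := by
      apply ContinuousOn.sub _ hPcont
      apply ContinuousOn.mul
      · exact (Real.continuous_exp.comp (continuous_const.mul continuous_id)).continuousOn
      · exact (hEcont.add continuousOn_const).sqrt
    have hφderiv : ∀ t ∈ Ioo (0:ℝ) T, HasDerivAt φ
        ((Real.exp (-M₀ * t) * (-M₀)) * Real.sqrt (E t + ε ^ 2)
          + Real.exp (-M₀ * t) * (1 / (2 * Real.sqrt (E t + ε ^ 2)) * g t) - q t) t := by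
      intro t ht
      have hXpos : 0 < E t + ε ^ 2 := add_pos_of_nonneg_of_pos (hEnonneg t) (pow_pos hε 2)
      have h1 : HasDerivAt (fun t' => E t' + ε ^ 2) (g t) t := (hE' t ht).add_const _
      have h2 : HasDerivAt (fun t' => Real.sqrt (E t' + ε ^ 2))
          (1 / (2 * Real.sqrt (E t + ε ^ 2)) * g t) t :=
        (Real.hasDerivAt_sqrt hXpos.ne').comp t h1
      have h3 : HasDerivAt (fun t' => Real.exp (-M₀ * t'))
          (Real.exp (-M₀ * t) * (-M₀)) t := by
        have := ((hasDerivAt_id t).const_mul (-M₀)).exp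
        simpa [mul_comm] using this
      exact ((h3.mul h2).sub (hP' t ht))
    have hφderiv_nonpos : ∀ t ∈ Ioo (0:ℝ) T,
        ((Real.exp (-M₀ * t) * (-M₀)) * Real.sqrt (E t + ε ^ 2)
          + Real.exp (-M₀ * t) * (1 / (2 * Real.sqrt (E t + ε ^ 2)) * g t) - q t) ≤ 0 := by
      intro t ht
      have htIcc : t ∈ Icc (0:ℝ) T := ⟨ht.1.le, ht.2.le⟩
      have hXpos : 0 < E t + ε ^ 2 := add_pos_of_nonneg_of_pos (hEnonneg t) (pow_pos hε 2)
      set sX := Real.sqrt (E t + ε ^ 2) with hsX_def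
      have hsXpos : 0 < sX := Real.sqrt_pos.mpr hXpos
      have hsX2 : sX ^ 2 = E t + ε ^ 2 := Real.sq_sqrt hXpos.le
      have hsE : Real.sqrt (E t) ≤ sX := by
        apply Real.sqrt_le_sqrt; nlinarith [sq_nonneg ε]
      have hsEnn : 0 ≤ Real.sqrt (E t) := Real.sqrt_nonneg _
      have hsESnn : 0 ≤ Real.sqrt (ES t) := Real.sqrt_nonneg _
      have hg2 : g t ≤ 2 * M₀ * (E t + ε ^ 2) + 2 * sX * Real.sqrt (ES t) := by
        have := hgbound t htIcc
        nlinarith [hEnonneg t, sq_nonneg ε, hsE, hsESnn, hsEnn]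
      have hdiv : 1 / (2 * sX) * g t ≤ M₀ * sX + Real.sqrt (ES t) := by
        rw [div_mul_eq_mul_div, one_mul, div_le_iff₀ (by positivity : (0:ℝ) < 2 * sX)]
        calc g t ≤ 2 * M₀ * (E t + ε ^ 2) + 2 * sX * Real.sqrt (ES t) := hg2
          _ = (M₀ * sX + Real.sqrt (ES t)) * (2 * sX) := by nlinarith [hsX2]
      have hexp : 0 < Real.exp (-M₀ * t) := Real.exp_pos _
      have hqt : q t = Real.exp (-M₀ * t) * Real.sqrt (ES t) := rfl
      rw [hqt]
      nlinarith [mul_le_mul_of_nonneg_left hdiv hexp.le, hsXpos]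
    have hanti : AntitoneOn φ (Icc 0 T) := by
      apply antitoneOn_of_deriv_nonpos (convex_Icc 0 T) hφcont
      · rw [interior_Icc]
        intro t ht
        exact (hφderiv t ht).differentiableAt.differentiableWithinAt
      · rw [interior_Icc]
        intro t ht
        rw [(hφderiv t ht).deriv]
        exact hφderiv_nonpos t ht
    have hφ0 : φ 0 = ε := by
      rw [hφ_def]
      simp only
      rw [hE0]
      have : P 0 = 0 := intervalIntegral.integral_same
      rw [this]
      simp [Real.sqrt_sq hε.le]
    have h0mem : (0:ℝ) ∈ Icc (0:ℝ) T := ⟨le_rfl, hT.le⟩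
    have hle := hanti h0mem ht₀ ht₀.1
    rw [hφ0] at hle
    have hsE : Real.sqrt (E t₀) ≤ Real.sqrt (E t₀ + ε ^ 2) := by
      apply Real.sqrt_le_sqrt; nlinarith [sq_nonneg ε]
    have hexp : 0 < Real.exp (-M₀ * t₀) := Real.exp_pos _
    have := mul_le_mul_of_nonneg_left hsE hexp.le
    have hφt₀ : Real.exp (-M₀ * t₀) * Real.sqrt (E t₀ + ε ^ 2) - P t₀ ≤ ε := hle
    linarith
  -- conclude
  have hfinal : Real.exp (-M₀ * t₀) * Real.sqrt (E t₀) ≤ P t₀ := by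
    by_contra hcon
    push_neg at hcon
    have := hmain ((Real.exp (-M₀ * t₀) * Real.sqrt (E t₀) - P t₀) / 2)
      (by linarith)
    linarith
  have hexp : 0 < Real.exp (M₀ * t₀) := Real.exp_pos _
  have h1 := mul_le_mul_of_nonneg_left hfinal hexp.le
  have h2 : Real.exp (M₀ * t₀) * (Real.exp (-M₀ * t₀) * Real.sqrt (E t₀))
      = Real.sqrt (E t₀) := by
    rw [← mul_assoc, ← Real.exp_add]
    ring_nf
    simp
  rw [h2] at h1
  exact h1
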